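/- For any connected simple graph G on n ≥ 2 vertices, the Randić index satisfies R(G) ≥ √(n-1), with equality if and only if G is the star K_{1,n-1}. -/

import Mathlib

open Finset Real Matrix

/-- The Randić index of a finite simple graph:
`R(G) = ∑_{uv ∈ E(G)} 1/√(d(u)·d(v))`. -/
noncomputable def randicIndex {V : Type*} [Fintype V] (G : SimpleGraph V) : ℝ :=
  letI : DecidableRel G.Adj := Classical.decRel _
  ∑ e ∈ G.edgeFinset,
    Sym2.lift ⟨fun u v => 1 / Real.sqrt ((G.degree u : ℝ) * (G.degree v : ℝ)),
      fun u v => by simp [mul_comm]⟩ e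

/-- The algebraic connectivity of a graph on `Fin n`: the second smallest eigenvalue
of the Laplacian matrix, characterized (via Courant–Fischer, since the all-ones vector
is an eigenvector of the smallest eigenvalue `0`) as the infimum of the Rayleigh
quotient over nonzero vectors orthogonal to the all-ones vector. -/
noncomputable def algebraicConnectivity {n : ℕ} (G : SimpleGraph (Fin n)) : ℝ :=
  letI : DecidableRel G.Adj := Classical.decRel _
  sInf {r : ℝ | ∃ x : Fin n → ℝ, x ≠ 0 ∧ (∑ i, x i) = 0 ∧
    r = (x ⬝ᵥ ((G.lapMatrix ℝ).mulVec x)) / (x ⬝ᵥ x)}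

/-- The edge connectivity of a graph: the least number of edges whose deletion
disconnects the graph. -/
noncomputable def edgeConnectivity {V : Type*} [Fintype V] (G : SimpleGraph V) : ℕ :=
  sInf {k : ℕ | ∃ s : Set (Sym2 V), s ⊆ G.edgeSet ∧ s.ncard = k ∧
    ¬ (G.deleteEdges s).Connected}

/-- The star `K_{1,n-1}` on vertex set `Fin n`: vertex `0` is adjacent to all others. -/
def starGraph (n : ℕ) : SimpleGraph (Fin n) where
  Adj i j := i ≠ j ∧ ((i : ℕ) = 0 ∨ (j : ℕ) = 0)
  symm := by constructor; tauto
  loopless := by constructor; tauto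


namespace RandicAux

variable {n : ℕ} (G : SimpleGraph (Fin n)) [DecidableRel G.Adj]

lemma two_mul_sum_edge (f : Fin n → Fin n → ℝ) (hf : ∀ u v, f u v = f v u) :
    2 * ∑ e ∈ G.edgeFinset, Sym2.lift ⟨f, hf⟩ e
      = ∑ v, ∑ u ∈ G.neighborFinset v, f v u := by
  classical
  have key : ∀ e ∈ G.edgeFinset,
      ∑ p ∈ (univ.filter fun p : Fin n × Fin n => G.Adj p.1 p.2).filter
          (fun p => Sym2.mk p.1 p.2 = e), f p.1 p.2 = 2 * Sym2.lift ⟨f, hf⟩ e := by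
    intro e he
    induction e with
    | _ a b =>
      rw [SimpleGraph.mem_edgeFinset, SimpleGraph.mem_edgeSet] at he
      have hab : a ≠ b := G.ne_of_adj he
      have hset : (univ.filter fun p : Fin n × Fin n => G.Adj p.1 p.2).filter
          (fun p => Sym2.mk p.1 p.2 = s(a, b)) = {(a, b), (b, a)} := by
        ext ⟨x, y⟩
        simp only [Finset.mem_filter, Finset.mem_univ, true_and, Finset.mem_insert,
          Finset.mem_singleton, Prod.mk.injEq]
        constructor
        · rintro ⟨hadj, hxy⟩
          rw [show (Sym2.mk x y) = s(x,y) from rfl, Sym2.eq_iff] at hxy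
          tauto
        · rintro (⟨rfl, rfl⟩ | ⟨rfl, rfl⟩)
          · exact ⟨he, by rw [show (Sym2.mk x y) = s(x,y) from rfl]⟩
          · exact ⟨G.adj_symm he, by rw [show (Sym2.mk x y) = s(x,y) from rfl, Sym2.eq_swap]⟩
      rw [hset, Finset.sum_pair (by simp [Prod.ext_iff, hab] : ((a,b) : Fin n × Fin n) ≠ (b,a))]
      simp only [Sym2.lift_mk]
      rw [hf b a]; ring
  calc 2 * ∑ e ∈ G.edgeFinset, Sym2.lift ⟨f, hf⟩ e
      = ∑ e ∈ G.edgeFinset, 2 * Sym2.lift ⟨f, hf⟩ e := by rw [Finset.mul_sum]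
    _ = ∑ e ∈ G.edgeFinset, ∑ p ∈ (univ.filter fun p : Fin n × Fin n =>
          G.Adj p.1 p.2).filter (fun p => Sym2.mk p.1 p.2 = e), f p.1 p.2 :=
        (Finset.sum_congr rfl key).symm
    _ = ∑ p ∈ univ.filter (fun p : Fin n × Fin n => G.Adj p.1 p.2), f p.1 p.2 := by
        apply Finset.sum_fiberwise_of_maps_to
        intro p hp
        rw [Finset.mem_filter] at hp
        rw [SimpleGraph.mem_edgeFinset]
        exact hp.2
    _ = ∑ v, ∑ u ∈ G.neighborFinset v, f v u := by
        rw [Finset.sum_filter, Fintype.sum_prod_type]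
        refine Finset.sum_congr rfl fun v _ => ?_
        rw [SimpleGraph.neighborFinset_eq_filter, Finset.sum_filter]


lemma sum_deg_real : ∑ v, (G.degree v : ℝ) = 2 * (#G.edgeFinset : ℝ) := by
  rw [← Nat.cast_sum]
  rw [G.sum_degrees_eq_twice_card_edges]
  push_cast; ring

lemma compl_card (v : Fin n) :
    #((univ \ G.neighborFinset v).erase v) = n - G.degree v - 1 := by
  rw [Finset.card_erase_of_mem, Finset.card_sdiff_of_subset (Finset.subset_univ _)]
  · rw [Finset.card_univ, Fintype.card_fin, G.card_neighborFinset_eq_degree]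
  · rw [Finset.mem_sdiff]
    exact ⟨Finset.mem_univ _, fun h => G.irrefl (G.mem_neighborFinset v v |>.mp h)⟩

lemma compl_split (v : Fin n) :
    ∑ u ∈ univ \ G.neighborFinset v, (G.degree u : ℝ)
      = (G.degree v : ℝ) + ∑ u ∈ (univ \ G.neighborFinset v).erase v, (G.degree u : ℝ) := by
  refine (Finset.add_sum_erase _ _ ?_).symm
  rw [Finset.mem_sdiff]
  exact ⟨Finset.mem_univ _, fun h => G.irrefl (G.mem_neighborFinset v v |>.mp h)⟩

lemma deg_lt (v : Fin n) : G.degree v < n := by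
  simpa using G.degree_lt_card_verts v

lemma compl_card_real (v : Fin n) :
    ((n - G.degree v - 1 : ℕ) : ℝ) = (n : ℝ) - G.degree v - 1 := by
  have h := deg_lt G v
  rw [Nat.sub_sub, Nat.cast_sub (by omega)]
  push_cast; ring

lemma nbr_split (v : Fin n) :
    ∑ u ∈ univ \ G.neighborFinset v, (G.degree u : ℝ)
        + ∑ u ∈ G.neighborFinset v, (G.degree u : ℝ)
      = 2 * (#G.edgeFinset : ℝ) := by
  rw [Finset.sum_sdiff (Finset.subset_univ _), sum_deg_real G]

lemma Dv_le (hd : ∀ v, 0 < G.degree v) (v : Fin n) :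
    ∑ u ∈ G.neighborFinset v, (G.degree u : ℝ)
      ≤ 2 * (#G.edgeFinset : ℝ) - ((n : ℝ) - 1) := by
  have hsplit := nbr_split G v
  have h1 : ((n : ℝ) - 1) ≤ ∑ u ∈ univ \ G.neighborFinset v, (G.degree u : ℝ) := by
    rw [compl_split G v]
    have hcard : (#((univ \ G.neighborFinset v).erase v) : ℝ)
        ≤ ∑ u ∈ (univ \ G.neighborFinset v).erase v, (G.degree u : ℝ) := by
      have := Finset.card_nsmul_le_sum ((univ \ G.neighborFinset v).erase v)
        (fun u => (G.degree u : ℝ)) 1 (fun u _ => by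
          show (1:ℝ) ≤ (G.degree u : ℝ); exact_mod_cast hd u)
      simpa using this
    rw [compl_card G v, compl_card_real G v] at hcard
    have : (0:ℝ) ≤ G.degree v := Nat.cast_nonneg _
    linarith
  linarith

lemma Dv_eq (hd : ∀ v, 0 < G.degree v) (v : Fin n)
    (heq : ∑ u ∈ G.neighborFinset v, (G.degree u : ℝ)
      = 2 * (#G.edgeFinset : ℝ) - ((n : ℝ) - 1)) :
    ∀ u, ¬ G.Adj v u → u ≠ v → G.degree u = 1 := by
  intro u hadj huv
  have hsplit := nbr_split G v
  have hcompl : ∑ u ∈ univ \ G.neighborFinset v, (G.degree u : ℝ) = (n : ℝ) - 1 := by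
    linarith
  rw [compl_split G v] at hcompl
  have hzero : ∑ u ∈ (univ \ G.neighborFinset v).erase v, ((G.degree u : ℝ) - 1) = 0 := by
    rw [Finset.sum_sub_distrib, Finset.sum_const, compl_card G v, nsmul_eq_mul, mul_one,
      compl_card_real G v]
    linarith
  have hmem : u ∈ (univ \ G.neighborFinset v).erase v := by
    rw [Finset.mem_erase, Finset.mem_sdiff]
    exact ⟨huv, Finset.mem_univ _, fun h => hadj ((G.mem_neighborFinset v u).mp h)⟩
  have := (Finset.sum_eq_zero_iff_of_nonneg (fun w hw => by
    rw [Finset.mem_erase, Finset.mem_sdiff] at hw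
    have := hd w
    simp only [sub_nonneg]
    exact_mod_cast this)).mp hzero u hmem
  have : (G.degree u : ℝ) = 1 := by linarith
  exact_mod_cast this


noncomputable def degProd : Sym2 (Fin n) → ℝ :=
  Sym2.lift ⟨fun u v => (G.degree u : ℝ) * (G.degree v : ℝ), fun u v => mul_comm _ _⟩

lemma two_mul_sum_degProd :
    2 * ∑ e ∈ G.edgeFinset, degProd G e
      = ∑ v, (G.degree v : ℝ) * ∑ u ∈ G.neighborFinset v, (G.degree u : ℝ) := by
  unfold degProd
  rw [two_mul_sum_edge G (fun u v => (G.degree u : ℝ) * (G.degree v : ℝ))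
    (fun u v => mul_comm _ _)]
  exact Finset.sum_congr rfl fun v _ => by rw [Finset.mul_sum]

lemma key_bound (hd : ∀ v, 0 < G.degree v) :
    ∑ e ∈ G.edgeFinset, degProd G e
      ≤ (#G.edgeFinset : ℝ) * (2 * (#G.edgeFinset : ℝ) - ((n : ℝ) - 1)) := by
  have h := two_mul_sum_degProd G
  have hle : ∑ v, (G.degree v : ℝ) * ∑ u ∈ G.neighborFinset v, (G.degree u : ℝ)
      ≤ ∑ v, (G.degree v : ℝ) * (2 * (#G.edgeFinset : ℝ) - ((n : ℝ) - 1)) :=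
    Finset.sum_le_sum fun v _ =>
      mul_le_mul_of_nonneg_left (Dv_le G hd v) (Nat.cast_nonneg _)
  rw [← Finset.sum_mul, sum_deg_real G] at hle
  linarith

lemma key_eq (hd : ∀ v, 0 < G.degree v)
    (heq : ∑ e ∈ G.edgeFinset, degProd G e
      = (#G.edgeFinset : ℝ) * (2 * (#G.edgeFinset : ℝ) - ((n : ℝ) - 1))) :
    ∀ v u, ¬ G.Adj v u → u ≠ v → G.degree u = 1 := by
  intro v u hadj huv
  have h := two_mul_sum_degProd G
  have hsum : ∑ v, (G.degree v : ℝ) * ∑ u ∈ G.neighborFinset v, (G.degree u : ℝ)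
      = ∑ v, (G.degree v : ℝ) * (2 * (#G.edgeFinset : ℝ) - ((n : ℝ) - 1)) := by
    rw [← Finset.sum_mul, sum_deg_real G]
    linarith
  have hall := (Finset.sum_eq_sum_iff_of_le (fun v _ =>
      mul_le_mul_of_nonneg_left (Dv_le G hd v) (Nat.cast_nonneg _))).mp hsum v (Finset.mem_univ v)
  have hDv : ∑ u ∈ G.neighborFinset v, (G.degree u : ℝ)
      = 2 * (#G.edgeFinset : ℝ) - ((n : ℝ) - 1) := by
    have hpos : (G.degree v : ℝ) ≠ 0 := by
      have := hd v; positivity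
    exact mul_left_cancel₀ hpos hall
  exact Dv_eq G hd v hDv u hadj huv


lemma degProd_pos (hd : ∀ v, 0 < G.degree v) :
    ∀ e ∈ G.edgeFinset, 0 < degProd G e := by
  intro e _
  induction e with
  | _ a b =>
    show 0 < (G.degree a : ℝ) * (G.degree b : ℝ)
    have := hd a; have := hd b
    positivity

lemma main_chain (hn : 2 ≤ n) (hd : ∀ v, 0 < G.degree v) (hne : G.edgeFinset.Nonempty) :
    √((n:ℝ)-1) ≤ ∑ e ∈ G.edgeFinset, 1 / √(degProd G e)
    ∧ (∑ e ∈ G.edgeFinset, 1 / √(degProd G e) = √((n:ℝ)-1) →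
        (#G.edgeFinset : ℝ) = (n:ℝ) - 1
        ∧ ∑ e ∈ G.edgeFinset, degProd G e
            = (#G.edgeFinset : ℝ) * (2 * (#G.edgeFinset : ℝ) - ((n : ℝ) - 1))) := by
  set M : ℝ := (#G.edgeFinset : ℝ) with hM
  set c : ℝ := (n:ℝ) - 1 with hcdef
  set M2 : ℝ := ∑ e ∈ G.edgeFinset, degProd G e with hM2
  set A : ℝ := ∑ e ∈ G.edgeFinset, √(degProd G e) with hA
  set R : ℝ := ∑ e ∈ G.edgeFinset, 1 / √(degProd G e) with hRdef
  have hwt := degProd_pos G hd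
  have hc0 : (0:ℝ) < c := by
    rw [hcdef]
    have : (2:ℝ) ≤ (n:ℝ) := by exact_mod_cast hn
    linarith
  have hK : (0:ℝ) < √c := Real.sqrt_pos.mpr hc0
  have hMpos : (0:ℝ) < M := by
    rw [hM]
    exact_mod_cast Finset.card_pos.mpr hne
  have hRnn : 0 ≤ R := Finset.sum_nonneg fun e _ => by positivity
  have hAnn : 0 ≤ A := Finset.sum_nonneg fun e _ => Real.sqrt_nonneg _
  have hCS1 : M ^ 2 ≤ R * A := by
    have h := Finset.sum_sq_le_sum_mul_sum_of_sq_eq_mul G.edgeFinset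
      (r := fun _ => (1:ℝ)) (f := fun e => 1 / √(degProd G e))
      (g := fun e => √(degProd G e))
      (fun e he => by positivity) (fun e he => Real.sqrt_nonneg _)
      (fun e he => by
        have h1 : √(degProd G e) ≠ 0 := ne_of_gt (Real.sqrt_pos.mpr (hwt e he))
        field_simp)
    have hsum1 : (∑ _e ∈ G.edgeFinset, (1:ℝ)) = M := by
      rw [Finset.sum_const, nsmul_eq_mul, mul_one]
    rw [hsum1] at h
    exact h
  have hCS2 : A ^ 2 ≤ M2 * M := by
    have h := Finset.sum_sq_le_sum_mul_sum_of_sq_eq_mul G.edgeFinset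
      (r := fun e => √(degProd G e)) (f := fun e => degProd G e)
      (g := fun _ => (1:ℝ))
      (fun e he => (hwt e he).le) (fun e he => zero_le_one)
      (fun e he => by rw [Real.sq_sqrt (hwt e he).le, mul_one])
    have hsum1 : (∑ _e ∈ G.edgeFinset, (1:ℝ)) = M := by
      rw [Finset.sum_const, nsmul_eq_mul, mul_one]
    rw [hsum1] at h
    exact h
  have h3 : M2 ≤ M * (2 * M - c) := key_bound G hd
  have h4 : c * (2 * M - c) ≤ M ^ 2 := by nlinarith [sq_nonneg (M - c)]
  have h4' : (2 * M - c) * c ≤ M ^ 2 := by linarith [mul_comm c (2 * M - c), h4]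
  have h5 : A ^ 2 ≤ M ^ 2 * (2 * M - c) := by
    calc A ^ 2 ≤ M2 * M := hCS2
      _ ≤ (M * (2 * M - c)) * M := mul_le_mul_of_nonneg_right h3 hMpos.le
      _ = M ^ 2 * (2 * M - c) := by ring
  have h6 : A ^ 2 * c ≤ M ^ 4 := by
    calc A ^ 2 * c ≤ (M ^ 2 * (2 * M - c)) * c := mul_le_mul_of_nonneg_right h5 hc0.le
      _ = M ^ 2 * ((2 * M - c) * c) := by ring
      _ ≤ M ^ 2 * M ^ 2 := mul_le_mul_of_nonneg_left h4' (sq_nonneg M)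
      _ = M ^ 4 := by ring
  have hAK : A * √c ≤ M ^ 2 := by
    have e1 : A * √c = √(A ^ 2 * c) := by
      rw [Real.sqrt_mul (sq_nonneg _), Real.sqrt_sq hAnn]
    have e2 : √(A ^ 2 * c) ≤ √(M ^ 4) := Real.sqrt_le_sqrt h6
    have e3 : √(M ^ 4) = M ^ 2 := by
      rw [show M ^ 4 = (M ^ 2) ^ 2 by ring, Real.sqrt_sq (sq_nonneg M)]
    linarith [e1, e2, e3]
  have hmain : √c ≤ R := by
    have t3 : M ^ 2 * √c ≤ R * M ^ 2 := by
      calc M ^ 2 * √c ≤ (R * A) * √c := mul_le_mul_of_nonneg_right hCS1 hK.le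
        _ = R * (A * √c) := by ring
        _ ≤ R * M ^ 2 := mul_le_mul_of_nonneg_left hAK hRnn
    have := (mul_le_mul_iff_left₀ (by positivity : (0:ℝ) < M ^ 2)).mp
      (by linarith : √c * M ^ 2 ≤ R * M ^ 2)
    exact this
  refine ⟨hmain, fun heq => ?_⟩
  have hReq : R = √c := heq
  have hAge : M ^ 2 ≤ √c * A := by rw [← hReq]; exact hCS1
  have hAeq : A * √c = M ^ 2 := le_antisymm hAK (by linarith [hAge])
  have hA2c : A ^ 2 * c = M ^ 4 := by
    have h := congrArg (fun x => x ^ 2) hAeq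
    simp only [mul_pow] at h
    rw [Real.sq_sqrt hc0.le] at h
    calc A ^ 2 * c = (M ^ 2) ^ 2 := h
      _ = M ^ 4 := by ring
  have e1 : M ^ 4 ≤ M ^ 2 * ((2 * M - c) * c) := by
    calc M ^ 4 = A ^ 2 * c := hA2c.symm
      _ ≤ (M ^ 2 * (2 * M - c)) * c := mul_le_mul_of_nonneg_right h5 hc0.le
      _ = M ^ 2 * ((2 * M - c) * c) := by ring
  have e2 : M ^ 2 * ((2 * M - c) * c) ≤ M ^ 4 := by
    calc M ^ 2 * ((2 * M - c) * c) ≤ M ^ 2 * M ^ 2 :=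
          mul_le_mul_of_nonneg_left h4' (sq_nonneg M)
      _ = M ^ 4 := by ring
  have e3 : M ^ 2 * ((2 * M - c) * c) = M ^ 2 * M ^ 2 := by
    rw [le_antisymm e2 e1]; ring
  have e4 : (2 * M - c) * c = M ^ 2 :=
    mul_left_cancel₀ (by positivity : (M:ℝ) ^ 2 ≠ 0) e3
  have hMc : M = c := by
    have hsq : (M - c) ^ 2 = 0 := by linear_combination -e4
    have := sq_eq_zero_iff.mp hsq
    linarith [sub_eq_zero.mp this]
  refine ⟨hMc, ?_⟩
  have f1 : M ^ 4 ≤ M2 * (M * c) := by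
    calc M ^ 4 = A ^ 2 * c := hA2c.symm
      _ ≤ (M2 * M) * c := mul_le_mul_of_nonneg_right hCS2 hc0.le
      _ = M2 * (M * c) := by ring
  have f3 : M * (2 * M - c) * (M * c) = M ^ 4 := by linear_combination (M ^ 2) * e4
  have f2 : M2 * (M * c) ≤ M ^ 4 := by
    calc M2 * (M * c) ≤ (M * (2 * M - c)) * (M * c) :=
          mul_le_mul_of_nonneg_right h3 (by positivity)
      _ = M ^ 4 := f3
  have f4 : M2 * (M * c) = M * (2 * M - c) * (M * c) := by
    rw [le_antisymm f2 f1, f3]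
  exact mul_right_cancel₀ (by positivity : M * c ≠ 0) f4

lemma deg_pos_of_connected (hn : 2 ≤ n) (hG : G.Connected) : ∀ v, 0 < G.degree v := by
  intro v
  rw [G.degree_pos_iff_exists_adj]
  have hex : ∃ u : Fin n, u ≠ v := by
    by_cases h : v = ⟨0, by omega⟩
    · exact ⟨⟨1, by omega⟩, by rw [h]; intro hcon; exact absurd (congrArg Fin.val hcon) (by simp)⟩
    · exact ⟨⟨0, by omega⟩, fun hcon => h hcon.symm⟩
  obtain ⟨u, hu⟩ := hex
  obtain ⟨p⟩ := hG.preconnected v u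
  cases p with
  | nil => exact absurd rfl hu
  | cons h q => exact ⟨_, h⟩

lemma structure_of (hn : 2 ≤ n) (hd : ∀ v, 0 < G.degree v)
    (hm : (#G.edgeFinset : ℝ) = (n:ℝ) - 1)
    (h1 : ∀ v u, ¬ G.Adj v u → u ≠ v → G.degree u = 1) :
    ∃ c : Fin n, ∀ u v, G.Adj u v ↔ (u ≠ v ∧ (u = c ∨ v = c)) := by
  have hmn : #G.edgeFinset = n - 1 := by
    have h0 : ((#G.edgeFinset : ℝ)) = ((n - 1 : ℕ) : ℝ) := by
      rw [hm, Nat.cast_sub (by omega)]; norm_num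
    exact_mod_cast h0
  have hsum : ∑ v, G.degree v = 2 * (n - 1) := by
    rw [G.sum_degrees_eq_twice_card_edges, hmn]
  have hleaf : ∃ l, G.degree l = 1 := by
    by_contra h
    push_neg at h
    have h2 : ∀ v : Fin n, 2 ≤ G.degree v := fun v => by
      have := hd v; have := h v; omega
    have hge : 2 * n ≤ ∑ v, G.degree v := by
      calc 2 * n = ∑ _v : Fin n, 2 := by
            rw [Finset.sum_const, Finset.card_univ, Fintype.card_fin, smul_eq_mul]; ring
        _ ≤ ∑ v, G.degree v := Finset.sum_le_sum fun v _ => h2 v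
    omega
  obtain ⟨l, hl⟩ := hleaf
  obtain ⟨c, hcN⟩ : ∃ c, G.neighborFinset l = {c} :=
    Finset.card_eq_one.mp (by rw [G.card_neighborFinset_eq_degree]; exact hl)
  have hlc : G.Adj l c := (G.mem_neighborFinset l c).mp (by rw [hcN]; exact Finset.mem_singleton_self c)
  have hdeg1 : ∀ u, u ≠ c → G.degree u = 1 := by
    intro u huc
    by_cases hu : u = l
    · rw [hu]; exact hl
    · refine h1 l u ?_ hu
      intro hadj
      have hmem : u ∈ G.neighborFinset l := (G.mem_neighborFinset l u).mpr hadj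
      rw [hcN, Finset.mem_singleton] at hmem
      exact huc hmem
  have hadjc : ∀ u, u ≠ c → G.Adj u c := by
    intro u huc
    by_contra hnadj
    have hdc : G.degree c = 1 := h1 u c hnadj (Ne.symm huc)
    have hall : ∀ v, G.degree v = 1 := by
      intro v
      by_cases h : v = c
      · rw [h]; exact hdc
      · exact hdeg1 v h
    have hsn : ∑ v, G.degree v = n := by
      rw [Finset.sum_congr rfl (fun v _ => hall v), Finset.sum_const, Finset.card_univ,
        Fintype.card_fin, smul_eq_mul, mul_one]
    have hn2 : n = 2 := by omega
    obtain ⟨w, hwN⟩ : ∃ w, G.neighborFinset u = {w} :=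
      Finset.card_eq_one.mp (by rw [G.card_neighborFinset_eq_degree]; exact hdeg1 u huc)
    have hadjw : G.Adj u w := (G.mem_neighborFinset u w).mp (by rw [hwN]; exact Finset.mem_singleton_self w)
    have hwu : w ≠ u := fun h => G.irrefl (h ▸ hadjw)
    have hwc : w = c := by
      subst hn2
      have h1' := w.isLt
      have h2' := u.isLt
      have h3' := c.isLt
      have h4' : w.val ≠ u.val := fun h => hwu (Fin.ext h)
      have h5' : c.val ≠ u.val := fun h => (Ne.symm huc) (Fin.ext h)
      exact Fin.ext (by omega)
    exact hnadj (hwc ▸ hadjw)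
  have hnoll : ∀ u v, u ≠ c → v ≠ c → ¬ G.Adj u v := by
    intro u v huc hvc hadj
    have hsub : ({v, c} : Finset (Fin n)) ⊆ G.neighborFinset u := by
      intro x hx
      rw [Finset.mem_insert, Finset.mem_singleton] at hx
      rcases hx with rfl | rfl
      · exact (G.mem_neighborFinset u x).mpr hadj
      · exact (G.mem_neighborFinset u x).mpr (hadjc u huc)
    have h2le : 2 ≤ G.degree u := by
      rw [← G.card_neighborFinset_eq_degree]
      calc 2 = ({v, c} : Finset (Fin n)).card := (Finset.card_pair hvc).symm
        _ ≤ _ := Finset.card_le_card hsub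
    rw [hdeg1 u huc] at h2le
    omega
  refine ⟨c, fun u v => ⟨fun hadj => ⟨G.ne_of_adj hadj, ?_⟩, ?_⟩⟩
  · by_contra hcon
    push_neg at hcon
    exact hnoll u v hcon.1 hcon.2 hadj
  · rintro ⟨hne, rfl | rfl⟩
    · exact G.adj_symm (hadjc v (Ne.symm hne))
    · exact hadjc u hne

lemma star_degree_c (hn : 2 ≤ n) {c : Fin n}
    (hc : ∀ u v, G.Adj u v ↔ (u ≠ v ∧ (u = c ∨ v = c))) :
    G.degree c = n - 1 := by
  have hN : G.neighborFinset c = univ.erase c := by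
    ext u
    rw [G.mem_neighborFinset, hc c u, Finset.mem_erase]
    constructor
    · rintro ⟨hne, _⟩; exact ⟨Ne.symm hne, Finset.mem_univ u⟩
    · rintro ⟨hne, _⟩; exact ⟨Ne.symm hne, Or.inl rfl⟩
  rw [← G.card_neighborFinset_eq_degree, hN, Finset.card_erase_of_mem (Finset.mem_univ c),
    Finset.card_univ, Fintype.card_fin]

lemma star_degree_leaf (hn : 2 ≤ n) {c : Fin n}
    (hc : ∀ u v, G.Adj u v ↔ (u ≠ v ∧ (u = c ∨ v = c))) {v : Fin n} (hvc : v ≠ c) :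
    G.degree v = 1 := by
  have hN : G.neighborFinset v = {c} := by
    ext u
    rw [G.mem_neighborFinset, hc v u, Finset.mem_singleton]
    constructor
    · rintro ⟨hne, h | h⟩
      · exact absurd h hvc
      · exact h
    · rintro rfl
      exact ⟨hvc, Or.inr rfl⟩
  rw [← G.card_neighborFinset_eq_degree, hN, Finset.card_singleton]

lemma star_value (hn : 2 ≤ n) {c : Fin n}
    (hc : ∀ u v, G.Adj u v ↔ (u ≠ v ∧ (u = c ∨ v = c))) :
    ∑ e ∈ G.edgeFinset, 1 / √(degProd G e) = √((n:ℝ)-1) := by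
  have hE : G.edgeFinset = (univ.erase c).image (fun v => s(v, c)) := by
    ext e
    induction e with
    | _ a b =>
      rw [SimpleGraph.mem_edgeFinset, SimpleGraph.mem_edgeSet, hc a b, Finset.mem_image]
      constructor
      · rintro ⟨hne, rfl | rfl⟩
        · refine ⟨b, Finset.mem_erase.mpr ⟨Ne.symm hne, Finset.mem_univ b⟩, ?_⟩
          rw [Sym2.eq_swap]
        · exact ⟨a, Finset.mem_erase.mpr ⟨hne, Finset.mem_univ a⟩, rfl⟩
      · rintro ⟨v, hv, hveq⟩
        have hvc : v ≠ c := (Finset.mem_erase.mp hv).1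
        rw [Sym2.eq_iff] at hveq
        rcases hveq with ⟨rfl, rfl⟩ | ⟨rfl, rfl⟩
        · exact ⟨hvc, Or.inr rfl⟩
        · exact ⟨Ne.symm hvc, Or.inl rfl⟩
  have hinj : Set.InjOn (fun v => s(v, c)) (univ.erase c : Finset (Fin n)) := by
    intro x hx y hy hxy
    simp only [Sym2.eq_iff] at hxy
    rcases hxy with ⟨h, -⟩ | ⟨h1, h2⟩
    · exact h
    · rw [Finset.coe_erase] at hx
      exact absurd h1 (by simpa using hx)
  rw [hE, Finset.sum_image (fun x hx y hy h => hinj hx hy h)]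
  have hterm : ∀ v ∈ univ.erase c, 1 / √(degProd G s(v, c)) = 1 / √((n:ℝ)-1) := by
    intro v hv
    have hvc : v ≠ c := (Finset.mem_erase.mp hv).1
    have : degProd G s(v, c) = ((n:ℝ) - 1) := by
      show (G.degree v : ℝ) * (G.degree c : ℝ) = (n:ℝ) - 1
      rw [star_degree_leaf G hn hc hvc, star_degree_c G hn hc]
      rw [Nat.cast_sub (by omega), Nat.cast_one, one_mul]
    rw [this]
  rw [Finset.sum_congr rfl hterm, Finset.sum_const,
    Finset.card_erase_of_mem (Finset.mem_univ c), Finset.card_univ, Fintype.card_fin,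
    nsmul_eq_mul, Nat.cast_sub (by omega : 1 ≤ n), Nat.cast_one, mul_one_div, Real.div_sqrt]

lemma lift_inv_sqrt
    (hs : ∀ a₁ a₂ : Fin n, (fun u v => 1 / Real.sqrt ((G.degree u : ℝ) * (G.degree v : ℝ))) a₁ a₂
      = (fun u v => 1 / Real.sqrt ((G.degree u : ℝ) * (G.degree v : ℝ))) a₂ a₁)
    (e : Sym2 (Fin n)) :
    Sym2.lift ⟨fun u v => 1 / Real.sqrt ((G.degree u : ℝ) * (G.degree v : ℝ)), hs⟩ e
      = 1 / √(degProd G e) := by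
  induction e with
  | _ a b => rfl

end RandicAux

theorem randicIndex_ge_sqrt_card_sub_one
    {n : ℕ} (hn : 2 ≤ n) (G : SimpleGraph (Fin n)) (hG : G.Connected) :
    randicIndex G ≥ Real.sqrt ((n : ℝ) - 1) ∧
    (randicIndex G = Real.sqrt ((n : ℝ) - 1) ↔ Nonempty (G ≃g starGraph n)) := by
  letI : DecidableRel G.Adj := Classical.decRel _
  have hd := RandicAux.deg_pos_of_connected G hn hG
  have hne : G.edgeFinset.Nonempty := by
    obtain ⟨w, hw⟩ := (G.degree_pos_iff_exists_adj ⟨0, by omega⟩).mp (hd ⟨0, by omega⟩)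
    exact ⟨s(⟨0, by omega⟩, w), SimpleGraph.mem_edgeFinset.mpr hw⟩
  have hR : randicIndex G = ∑ e ∈ G.edgeFinset, 1 / √(RandicAux.degProd G e) := by
    show (∑ e ∈ G.edgeFinset,
      Sym2.lift ⟨fun u v => 1 / Real.sqrt ((G.degree u : ℝ) * (G.degree v : ℝ)),
        fun u v => by simp [mul_comm]⟩ e) = _
    exact Finset.sum_congr rfl fun e _ => RandicAux.lift_inv_sqrt G _ e
  obtain ⟨hineq, heqc⟩ := RandicAux.main_chain G hn hd hne
  set z : Fin n := ⟨0, by omega⟩ with hz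
  have hstar : ∀ a b : Fin n, (starGraph n).Adj a b ↔ (a ≠ b ∧ (a = z ∨ b = z)) := by
    intro a b
    show (a ≠ b ∧ ((a : ℕ) = 0 ∨ (b : ℕ) = 0)) ↔ _
    have hv : ∀ w : Fin n, ((w : ℕ) = 0) ↔ w = z := by
      intro w
      constructor
      · intro h; exact Fin.ext (by simpa using h)
      · intro h; rw [h]
    rw [hv a, hv b]
  refine ⟨by rw [ge_iff_le, hR]; exact hineq, ?_, ?_⟩
  · intro heq
    rw [hR] at heq
    obtain ⟨hm, hM2eq⟩ := heqc heq
    have hcond := RandicAux.key_eq G hd hM2eq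
    obtain ⟨c, hc⟩ := RandicAux.structure_of G hn hd hm hcond
    refine ⟨⟨Equiv.swap c z, ?_⟩⟩
    intro u v
    rw [hstar, hc u v]
    have h1 : (Equiv.swap c z) u = (Equiv.swap c z) v ↔ u = v :=
      (Equiv.swap c z).apply_eq_iff_eq
    have h2 : ∀ w, (Equiv.swap c z) w = z ↔ w = c := by
      intro w
      constructor
      · intro h
        have h' := congrArg (Equiv.swap c z) h
        rwa [Equiv.swap_apply_self, Equiv.swap_apply_right] at h'
      · rintro rfl
        exact Equiv.swap_apply_left _ _
    rw [ne_eq, h1, h2, h2, ne_eq]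
  · rintro ⟨iso⟩
    have hc : ∀ u v, G.Adj u v ↔ (u ≠ v ∧ (u = iso.symm z ∨ v = iso.symm z)) := by
      intro u v
      rw [← iso.map_rel_iff]
      rw [hstar]
      have h1 : iso u = iso v ↔ u = v := EmbeddingLike.apply_eq_iff_eq iso
      have h2 : ∀ w, iso w = z ↔ w = iso.symm z := by
        intro w
        constructor
        · intro h; rw [← h]; exact (iso.symm_apply_apply w).symm
        · intro h; rw [h]; exact iso.apply_symm_apply z
      rw [ne_eq, h1, h2, h2, ne_eq]
    rw [hR]
    exact RandicAux.star_value G hn hc
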